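/- Let F denote the Fibonacci sequence with F(0) = 0, F(1) = 1, and let α = (α_i)_{i≥0} be the sequence α_i = F(i). Then for every integer n ≥ 2, the generalized symmetric Pascal triangle satisfies det(P_{α,α}(n)) = -2^{n-2}. -/

import Mathlib

open Matrix

/-- Entry `P_{i,j}` of the generalized Pascal triangle associated to sequences `α`, `β`:
`P_{i,0} = α i`, `P_{0,j} = β j`, and `P_{i,j} = P_{i-1,j} + P_{i,j-1}` for `i, j ≥ 1`. -/
def pascalEntry {R : Type*} [CommRing R] (α β : ℕ → R) : ℕ → ℕ → R
  | i, 0 => α i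
  | 0, j + 1 => β (j + 1)
  | i + 1, j + 1 => pascalEntry α β i (j + 1) + pascalEntry α β (i + 1) j

/-- The generalized Pascal triangle `P_{α,β}(n)`. -/
def genPascal {R : Type*} [CommRing R] (α β : ℕ → R) (n : ℕ) :
    Matrix (Fin n) (Fin n) R :=
  Matrix.of fun i j => pascalEntry α β (i : ℕ) (j : ℕ)

/-- The Töplitz matrix `T_{α,β}(n)`: `t_{i,j} = α_{i-j}` if `i ≥ j`, else `β_{j-i}`. -/
def toeplitz {R : Type*} [CommRing R] (α β : ℕ → R) (n : ℕ) :
    Matrix (Fin n) (Fin n) R :=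
  Matrix.of fun i j => if (j : ℕ) ≤ (i : ℕ) then α ((i : ℕ) - (j : ℕ)) else β ((j : ℕ) - (i : ℕ))

/-- The unipotent lower triangular matrix `L(n)` with `L_{i,j} = C(i,j)` for `i ≥ j`. -/
def lowerL (R : Type*) [CommRing R] (n : ℕ) : Matrix (Fin n) (Fin n) R :=
  Matrix.of fun i j => if (j : ℕ) ≤ (i : ℕ) then ((i : ℕ).choose (j : ℕ) : R) else 0

/-- The binomial inverse transform `α̂_i = ∑_{k=0}^{i} (-1)^{i+k} C(i,k) α_k`. -/
def hatSeq {R : Type*} [CommRing R] (α : ℕ → R) (i : ℕ) : R :=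
  ∑ k ∈ Finset.range (i + 1), (-1 : R) ^ (i + k) * (i.choose k : R) * α k

/-- The binomial transform `α̌_i = ∑_{k=0}^{i} C(i,k) α_k`. -/
def checkSeq {R : Type*} [CommRing R] (α : ℕ → R) (i : ℕ) : R :=
  ∑ k ∈ Finset.range (i + 1), (i.choose k : R) * α k


section Aux
open Finset


def hfib (m : ℕ) : ℤ := (-1)^(m+1) * Nat.fib m

def tfib (i j : ℕ) : ℤ := if j ≤ i then hfib (i - j) else hfib (j - i)

lemma hfib_zero : hfib 0 = 0 := by simp [hfib]
lemma hfib_one : hfib 1 = 1 := by simp [hfib]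
lemma hfib_two : hfib 2 = -1 := by simp [hfib]
lemma hfib_rec (m : ℕ) : hfib (m+2) = hfib m - hfib (m+1) := by
  simp only [hfib, Nat.fib_add_two]
  push_cast
  ring

lemma tfib_zero_left (j : ℕ) : tfib 0 j = hfib j := by
  unfold tfib
  split
  · have : j = 0 := by omega
    subst this; rfl
  · rfl

lemma tfib_zero_right (i : ℕ) : tfib i 0 = hfib i := by simp [tfib]

lemma tfib_shift (i j : ℕ) : tfib (i+1) (j+1) = tfib i j := by
  simp [tfib, Nat.succ_sub_succ, Nat.succ_le_succ_iff]

lemma fib_cast_add_two (j : ℕ) : (Nat.fib (j+1+1) : ℤ) = Nat.fib j + Nat.fib (j+1) := by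
  have : Nat.fib (j+1+1) = Nat.fib j + Nat.fib (j+1) := Nat.fib_add_two
  rw [this]; push_cast; ring

-- binomial transform of hfib is fib
lemma sum_choose_hfib (j : ℕ) :
    (∑ l ∈ Finset.range (j+1), (j.choose l : ℤ) * hfib l) = Nat.fib j ∧
    (∑ l ∈ Finset.range (j+1), (j.choose l : ℤ) * hfib (l+1)) =
      (Nat.fib (j+1) : ℤ) - Nat.fib j := by
  induction j with
  | zero => simp [hfib]
  | succ j ih =>
    obtain ⟨ih1, ih2⟩ := ih
    have key : ∀ a : ℕ, (∑ l ∈ Finset.range (j+2), ((j+1).choose l : ℤ) * hfib (l+a))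
        = (∑ l ∈ Finset.range (j+1), (j.choose l : ℤ) * hfib (l+1+a))
          + ∑ l ∈ Finset.range (j+1), (j.choose l : ℤ) * hfib (l+a) := by
      intro a
      have hB : (∑ l ∈ Finset.range (j+2), (j.choose l : ℤ) * hfib (l+a))
          = ∑ l ∈ Finset.range (j+1), (j.choose l : ℤ) * hfib (l+a) := by
        rw [Finset.sum_range_succ]
        simp [Nat.choose_succ_self]
      rw [Finset.sum_range_succ' (fun l => ((j+1).choose l : ℤ) * hfib (l+a)) (j+1),
        ← hB, Finset.sum_range_succ' (fun l => ((j).choose l : ℤ) * hfib (l+a)) (j+1)]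
      have hc : ∀ l, (((j+1).choose (l+1) : ℕ) : ℤ) * hfib (l+1+a)
          = (j.choose l : ℤ) * hfib (l+1+a) + (j.choose (l+1) : ℤ) * hfib (l+1+a) := by
        intro l; rw [Nat.choose_succ_succ]; push_cast; ring
      rw [Finset.sum_congr rfl (fun l _ => hc l), Finset.sum_add_distrib]
      simp only [Nat.choose_zero_right, Nat.cast_one, one_mul]
      ring
    constructor
    · have h0 := key 0
      simp only [add_zero] at h0
      rw [h0, ih1, ih2]
      ring
    · have h1 := key 1
      rw [h1]
      have : ∀ l ∈ Finset.range (j+1), (j.choose l : ℤ) * hfib (l+1+1)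
          = (j.choose l : ℤ) * hfib l - (j.choose l : ℤ) * hfib (l+1) := by
        intro l _; rw [hfib_rec]; ring
      rw [Finset.sum_congr rfl this, Finset.sum_sub_distrib, ih1, ih2, fib_cast_add_two]
      ring



lemma pe_left {R : Type*} [CommRing R] (α β : ℕ → R) (i : ℕ) :
    pascalEntry α β i 0 = α i := by simp [pascalEntry]

lemma pe_right {R : Type*} [CommRing R] (α β : ℕ → R) (j : ℕ) :
    pascalEntry α β 0 (j+1) = β (j+1) := by simp [pascalEntry]

lemma pe_succ {R : Type*} [CommRing R] (α β : ℕ → R) (i j : ℕ) :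
    pascalEntry α β (i+1) (j+1) = pascalEntry α β i (j+1) + pascalEntry α β (i+1) j := by
  simp [pascalEntry]

lemma choose_succ_sum (i : ℕ) (y : ℕ → ℤ) :
    ∑ k ∈ Finset.range (i+2), ((i+1).choose k : ℤ) * y k
      = ∑ k ∈ Finset.range (i+1), (i.choose k : ℤ) * (y k + y (k+1)) := by
  have hB : (∑ k ∈ Finset.range (i+2), (i.choose k : ℤ) * y k)
      = ∑ k ∈ Finset.range (i+1), (i.choose k : ℤ) * y k := by
    rw [Finset.sum_range_succ]; simp [Nat.choose_succ_self]
  have expand : ∑ k ∈ Finset.range (i+1), (i.choose k : ℤ) * (y k + y (k+1))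
      = (∑ k ∈ Finset.range (i+1), (i.choose k : ℤ) * y k)
        + ∑ k ∈ Finset.range (i+1), (i.choose k : ℤ) * y (k+1) := by
    rw [← Finset.sum_add_distrib]
    exact Finset.sum_congr rfl (fun k _ => by ring)
  rw [expand, ← hB,
    Finset.sum_range_succ' (fun k => ((i+1).choose k : ℤ) * y k) (i+1),
    Finset.sum_range_succ' (fun k => ((i).choose k : ℤ) * y k) (i+1)]
  have hc : ∀ k, (((i+1).choose (k+1) : ℕ) : ℤ) * y (k+1)
      = (i.choose k : ℤ) * y (k+1) + (i.choose (k+1) : ℤ) * y (k+1) := by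
    intro k; rw [Nat.choose_succ_succ]; push_cast; ring
  rw [Finset.sum_congr rfl (fun k _ => hc k), Finset.sum_add_distrib]
  simp only [Nat.choose_zero_right, Nat.cast_one, one_mul]
  ring

lemma sum_choose_tfib_left (i : ℕ) :
    ∑ k ∈ Finset.range (i+1), (i.choose k : ℤ) * tfib k 0 = Nat.fib i := by
  rw [← (sum_choose_hfib i).1]
  exact Finset.sum_congr rfl fun k _ => by rw [tfib_zero_right]

lemma pascalEntry_eq_aux : ∀ N i j, i + j ≤ N →
    pascalEntry (fun i => (Nat.fib i : ℤ)) (fun i => (Nat.fib i : ℤ)) i j =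
      ∑ k ∈ Finset.range (i+1), ∑ l ∈ Finset.range (j+1),
        (i.choose k : ℤ) * ((j.choose l : ℤ) * tfib k l) := by
  intro N
  induction N with
  | zero =>
    intro i j h
    have hi : i = 0 := by omega
    have hj : j = 0 := by omega
    subst hi; subst hj
    have h0 := sum_choose_tfib_left 0
    simp only [zero_add, Finset.sum_range_one, Nat.choose_zero_right, Nat.cast_one,
      one_mul] at h0 ⊢
    rw [pe_left, ← h0]
  | succ N IH =>
    intro i j h
    match i, j with
    | i, 0 =>
      rw [pe_left]
      have e : ∀ k ∈ Finset.range (i+1), (∑ l ∈ Finset.range (0+1),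
            (i.choose k : ℤ) * ((Nat.choose 0 l : ℤ) * tfib k l))
          = (i.choose k : ℤ) * tfib k 0 := by
        intro k _
        simp
      rw [Finset.sum_congr rfl e, sum_choose_tfib_left]
    | 0, j + 1 =>
      rw [pe_right, Finset.sum_range_one]
      have e : ∀ l ∈ Finset.range (j+1+1), (Nat.choose 0 0 : ℤ) * (((j+1).choose l : ℤ) * tfib 0 l)
          = ((j+1).choose l : ℤ) * hfib l := by
        intro l _; rw [tfib_zero_left]; simp
      rw [Finset.sum_congr rfl e, (sum_choose_hfib (j+1)).1]
    | i + 1, j + 1 =>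
      have h1 : i + (j+1) ≤ N := by omega
      have h2 : (i+1) + j ≤ N := by omega
      rw [pe_succ, IH i (j+1) h1, IH (i+1) j h2]
      have Ydef : ∀ k, (∑ l ∈ Finset.range (j+2), ((j+1).choose l : ℤ) * tfib k l)
          = ∑ l ∈ Finset.range (j+1), (j.choose l : ℤ) * (tfib k l + tfib k (l+1)) :=
        fun k => choose_succ_sum j (fun l => tfib k l)
      -- E1 : the (i+1, j+1) double sum
      have E1 : (∑ k ∈ Finset.range (i+1+1), ∑ l ∈ Finset.range (j+1+1),
            ((i+1).choose k : ℤ) * (((j+1).choose l : ℤ) * tfib k l))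
          = ∑ k ∈ Finset.range (i+1), ∑ l ∈ Finset.range (j+1),
              (i.choose k : ℤ) * ((j.choose l : ℤ) *
                ((tfib k l + tfib k (l+1)) + (tfib (k+1) l + tfib (k+1) (l+1)))) := by
        calc (∑ k ∈ Finset.range (i+2), ∑ l ∈ Finset.range (j+2),
                ((i+1).choose k : ℤ) * (((j+1).choose l : ℤ) * tfib k l))
            = ∑ k ∈ Finset.range (i+2), ((i+1).choose k : ℤ) *
                (∑ l ∈ Finset.range (j+2), ((j+1).choose l : ℤ) * tfib k l) :=
              Finset.sum_congr rfl fun k _ => by rw [Finset.mul_sum]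
          _ = ∑ k ∈ Finset.range (i+1), (i.choose k : ℤ) *
                ((∑ l ∈ Finset.range (j+2), ((j+1).choose l : ℤ) * tfib k l)
                 + ∑ l ∈ Finset.range (j+2), ((j+1).choose l : ℤ) * tfib (k+1) l) :=
              choose_succ_sum i _
          _ = ∑ k ∈ Finset.range (i+1), ∑ l ∈ Finset.range (j+1),
                (i.choose k : ℤ) * ((j.choose l : ℤ) *
                  ((tfib k l + tfib k (l+1)) + (tfib (k+1) l + tfib (k+1) (l+1)))) := by
              refine Finset.sum_congr rfl fun k _ => ?_
              rw [Ydef k, Ydef (k+1), ← Finset.sum_add_distrib, Finset.mul_sum]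
              exact Finset.sum_congr rfl fun l _ => by ring
      -- E2 : the (i, j+1) double sum
      have E2 : (∑ k ∈ Finset.range (i+1), ∑ l ∈ Finset.range (j+1+1),
            (i.choose k : ℤ) * (((j+1).choose l : ℤ) * tfib k l))
          = ∑ k ∈ Finset.range (i+1), ∑ l ∈ Finset.range (j+1),
              (i.choose k : ℤ) * ((j.choose l : ℤ) * (tfib k l + tfib k (l+1))) := by
        refine Finset.sum_congr rfl fun k _ => ?_
        calc (∑ l ∈ Finset.range (j+2), (i.choose k : ℤ) * (((j+1).choose l : ℤ) * tfib k l))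
            = (i.choose k : ℤ) * ∑ l ∈ Finset.range (j+2), ((j+1).choose l : ℤ) * tfib k l := by
              rw [Finset.mul_sum]
          _ = (i.choose k : ℤ) * ∑ l ∈ Finset.range (j+1),
                (j.choose l : ℤ) * (tfib k l + tfib k (l+1)) := by rw [Ydef k]
          _ = _ := by rw [Finset.mul_sum]
      -- E3 : the (i+1, j) double sum
      have E3 : (∑ k ∈ Finset.range (i+1+1), ∑ l ∈ Finset.range (j+1),
            ((i+1).choose k : ℤ) * ((j.choose l : ℤ) * tfib k l))
          = ∑ k ∈ Finset.range (i+1), ∑ l ∈ Finset.range (j+1),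
              (i.choose k : ℤ) * ((j.choose l : ℤ) * (tfib k l + tfib (k+1) l)) := by
        calc (∑ k ∈ Finset.range (i+2), ∑ l ∈ Finset.range (j+1),
                ((i+1).choose k : ℤ) * ((j.choose l : ℤ) * tfib k l))
            = ∑ k ∈ Finset.range (i+2), ((i+1).choose k : ℤ) *
                (∑ l ∈ Finset.range (j+1), (j.choose l : ℤ) * tfib k l) :=
              Finset.sum_congr rfl fun k _ => by rw [Finset.mul_sum]
          _ = ∑ k ∈ Finset.range (i+1), (i.choose k : ℤ) *
                ((∑ l ∈ Finset.range (j+1), (j.choose l : ℤ) * tfib k l)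
                 + ∑ l ∈ Finset.range (j+1), (j.choose l : ℤ) * tfib (k+1) l) :=
              choose_succ_sum i _
          _ = _ := by
              refine Finset.sum_congr rfl fun k _ => ?_
              rw [← Finset.sum_add_distrib, Finset.mul_sum]
              exact Finset.sum_congr rfl fun l _ => by ring
      rw [E1, E2, E3, ← Finset.sum_add_distrib]
      refine Finset.sum_congr rfl fun k _ => ?_
      rw [← Finset.sum_add_distrib]
      refine Finset.sum_congr rfl fun l _ => ?_
      rw [tfib_shift]
      ring



def Tmat (n : ℕ) : Matrix (Fin n) (Fin n) ℤ := Matrix.of fun i j => tfib i j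

lemma pascalEntry_eq (i j : ℕ) :
    pascalEntry (fun i => (Nat.fib i : ℤ)) (fun i => (Nat.fib i : ℤ)) i j =
      ∑ k ∈ Finset.range (i+1), ∑ l ∈ Finset.range (j+1),
        (i.choose k : ℤ) * ((j.choose l : ℤ) * tfib k l) :=
  pascalEntry_eq_aux (i+j) i j le_rfl

lemma lowerL_sum {n : ℕ} (i : Fin n) (x : ℕ → ℤ) :
    (∑ k : Fin n, lowerL ℤ n i k * x k)
      = ∑ k ∈ Finset.range ((i:ℕ)+1), (((i:ℕ)).choose k : ℤ) * x k := by
  have h1 : (∑ k : Fin n, lowerL ℤ n i k * x k)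
      = ∑ k ∈ Finset.range n, (if k ≤ (i:ℕ) then (((i:ℕ)).choose k : ℤ) else 0) * x k := by
    rw [← Fin.sum_univ_eq_sum_range (fun k => (if k ≤ (i:ℕ) then (((i:ℕ)).choose k : ℤ) else 0) * x k) n]
    rfl
  rw [h1, ← Finset.sum_subset (Finset.range_subset_range.2 (by omega : (i:ℕ)+1 ≤ n))]
  · exact Finset.sum_congr rfl fun k hk => by
      rw [if_pos (by simpa [Nat.lt_succ_iff] using Finset.mem_range.1 hk)]
  · intro k _ hk
    rw [if_neg (by simpa [Nat.lt_succ_iff] using hk), zero_mul]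

lemma genPascal_factor (n : ℕ) :
    genPascal (fun i => (Nat.fib i : ℤ)) (fun i => (Nat.fib i : ℤ)) n
      = lowerL ℤ n * Tmat n * (lowerL ℤ n)ᵀ := by
  ext i j
  have step1 : ∀ x : Fin n, (lowerL ℤ n * Tmat n) i x
      = ∑ k ∈ Finset.range ((i:ℕ)+1), (((i:ℕ)).choose k : ℤ) * tfib k (x:ℕ) := by
    intro x
    rw [Matrix.mul_apply]
    exact lowerL_sum i (fun k => tfib k (x:ℕ))
  have step2 : (lowerL ℤ n * Tmat n * (lowerL ℤ n)ᵀ) i j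
      = ∑ x : Fin n, lowerL ℤ n j x *
          ∑ k ∈ Finset.range ((i:ℕ)+1), (((i:ℕ)).choose k : ℤ) * tfib k (x:ℕ) := by
    rw [Matrix.mul_apply]
    exact Finset.sum_congr rfl fun x _ => by
      rw [Matrix.transpose_apply, step1 x, mul_comm]
  rw [step2, lowerL_sum j (fun l => ∑ k ∈ Finset.range ((i:ℕ)+1), (((i:ℕ)).choose k : ℤ) * tfib k l)]
  simp only [genPascal, Matrix.of_apply]
  rw [pascalEntry_eq, Finset.sum_comm]
  refine Finset.sum_congr rfl fun l _ => ?_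
  rw [Finset.mul_sum]
  exact Finset.sum_congr rfl fun k _ => by ring

lemma det_lowerL (n : ℕ) : (lowerL ℤ n).det = 1 := by
  rw [Matrix.det_of_lowerTriangular (lowerL ℤ n)
    (by
      intro i j hij
      have : (i:ℕ) < (j:ℕ) := hij
      simp only [lowerL, Matrix.of_apply]
      rw [if_neg (by omega)])]
  simp [lowerL]

def wfun (i j : ℕ) : ℤ :=
  if i = 0 then hfib j
  else if i = 1 then tfib 1 j
  else if j < i then 0 else if j = i then 2 else 2 * hfib (j - i + 1)





def Bmat (n : ℕ) : Matrix (Fin n) (Fin n) ℤ := Matrix.of fun i j =>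
  if (i:ℕ) = j then 1
  else if (j:ℕ)+1 = i ∧ 2 ≤ (i:ℕ) then 1
  else if (j:ℕ)+2 = i then -1 else 0


lemma det_Bmat (n : ℕ) : (Bmat n).det = 1 := by
  rw [Matrix.det_of_lowerTriangular (Bmat n)
    (by
      intro i j hij
      have h : (i:ℕ) < (j:ℕ) := hij
      simp only [Bmat, Matrix.of_apply]
      rw [if_neg (by omega), if_neg (by omega), if_neg (by omega)])]
  simp [Bmat]

lemma Bmat_sum {n : ℕ} (i : Fin n) (x : ℕ → ℤ) :
    (∑ k : Fin n, Bmat n i k * x k) =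
      if 2 ≤ (i:ℕ) then x i + x ((i:ℕ)-1) - x ((i:ℕ)-2) else x i := by
  have h1 : (∑ k : Fin n, Bmat n i k * x k)
      = ∑ k ∈ Finset.range n,
          (if (i:ℕ) = k then 1 else if k+1 = (i:ℕ) ∧ 2 ≤ (i:ℕ) then 1
            else if k+2 = (i:ℕ) then (-1:ℤ) else 0) * x k := by
    rw [← Fin.sum_univ_eq_sum_range (fun k =>
      (if (i:ℕ) = k then 1 else if k+1 = (i:ℕ) ∧ 2 ≤ (i:ℕ) then 1
        else if k+2 = (i:ℕ) then (-1:ℤ) else 0) * x k) n]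
    rfl
  rw [h1]
  by_cases h2 : 2 ≤ (i:ℕ)
  · rw [if_pos h2]
    have e : ∀ k ∈ Finset.range n,
        (if (i:ℕ) = k then 1 else if k+1 = (i:ℕ) ∧ 2 ≤ (i:ℕ) then 1
          else if k+2 = (i:ℕ) then (-1:ℤ) else 0) * x k
        = (if k = (i:ℕ) then x k else 0)
          + ((if k = (i:ℕ)-1 then x k else 0) - (if k = (i:ℕ)-2 then x k else 0)) := by
      intro k _
      split_ifs <;> first | omega | ring
    rw [Finset.sum_congr rfl e, Finset.sum_add_distrib, Finset.sum_sub_distrib,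
      Finset.sum_ite_eq' (Finset.range n) ((i:ℕ)) x,
      Finset.sum_ite_eq' (Finset.range n) ((i:ℕ)-1) x,
      Finset.sum_ite_eq' (Finset.range n) ((i:ℕ)-2) x,
      if_pos (Finset.mem_range.2 i.isLt),
      if_pos (Finset.mem_range.2 (by omega : (i:ℕ)-1 < n)),
      if_pos (Finset.mem_range.2 (by omega : (i:ℕ)-2 < n))]
    ring
  · rw [if_neg h2]
    have e : ∀ k ∈ Finset.range n,
        (if (i:ℕ) = k then 1 else if k+1 = (i:ℕ) ∧ 2 ≤ (i:ℕ) then 1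
          else if k+2 = (i:ℕ) then (-1:ℤ) else 0) * x k
        = (if k = (i:ℕ) then x k else 0) := by
      intro k _
      split_ifs <;> first | omega | ring
    rw [Finset.sum_congr rfl e, Finset.sum_ite_eq' (Finset.range n) ((i:ℕ)) x,
      if_pos (Finset.mem_range.2 i.isLt)]

lemma BT_eq (n : ℕ) : Bmat n * Tmat n = Matrix.of fun i j : Fin n => wfun i j := by
  ext i j
  rw [Matrix.mul_apply]
  have := Bmat_sum i (fun k => tfib k (j:ℕ))
  rw [show (∑ k : Fin n, Bmat n i k * Tmat n k j)
      = ∑ k : Fin n, Bmat n i k * (fun k => tfib k (j:ℕ)) (k:ℕ) from rfl, this]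
  simp only [Matrix.of_apply]
  -- now pure arithmetic on naturals
  rcases Nat.lt_or_ge (i:ℕ) 2 with hi | hi
  · rw [if_neg (by omega)]
    unfold wfun
    interval_cases h : (i:ℕ)
    · rw [if_pos rfl]
      exact tfib_zero_left _
    · rw [if_neg (by omega), if_pos rfl]
  · rw [if_pos hi]
    obtain ⟨m, hm⟩ : ∃ m, (i:ℕ) = m + 2 := ⟨(i:ℕ)-2, by omega⟩
    rw [hm]
    unfold wfun
    rw [if_neg (by omega), if_neg (by omega)]
    simp only [show m+2-1 = m+1 from by omega, show m+2-2 = m from by omega]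
    rcases Nat.lt_or_ge (j:ℕ) (m+2) with hj | hj
    · rw [if_pos hj]
      rcases Nat.lt_or_ge (j:ℕ) (m+1) with hj1 | hj1
      · -- j ≤ m
        have hj2 : (j:ℕ) ≤ m := by omega
        unfold tfib
        rw [if_pos (by omega), if_pos (by omega), if_pos (by omega)]
        have e1 : m+2-(j:ℕ) = (m-(j:ℕ))+2 := by omega
        have e2 : m+1-(j:ℕ) = (m-(j:ℕ))+1 := by omega
        rw [e1, e2, hfib_rec]
        ring
      · -- j = m+1
        have : (j:ℕ) = m+1 := by omega
        rw [this]
        unfold tfib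
        rw [if_pos (by omega), if_pos (by omega), if_neg (by omega)]
        simp only [show m+2-(m+1) = 1 from by omega, show m+1-(m+1) = 0 from by omega,
          show m+1-m = 1 from by omega]
        rw [hfib_zero, hfib_one]
        ring
    · rcases Nat.eq_or_lt_of_le hj with hj2 | hj2
      · have hje : (j:ℕ) = m+2 := by omega
        rw [hje, if_neg (by omega), if_pos rfl]
        unfold tfib
        rw [if_pos (by omega), if_neg (by omega), if_neg (by omega)]
        simp only [show m+2-(m+2) = 0 from by omega, show m+2-(m+1) = 1 from by omega,
          show m+2-m = 2 from by omega]
        rw [hfib_zero, hfib_one, hfib_two]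
        ring
      · -- j ≥ m+3
        rw [if_neg (by omega), if_neg (by omega)]
        unfold tfib
        rw [if_neg (by omega), if_neg (by omega), if_neg (by omega)]
        have e1 : (j:ℕ) - m = ((j:ℕ)-(m+2))+2 := by omega
        have e2 : (j:ℕ) - (m+1) = ((j:ℕ)-(m+2))+1 := by omega
        rw [e1, e2, hfib_rec]
        ring


def Wmat (n : ℕ) : Matrix (Fin n) (Fin n) ℤ :=
  Matrix.of fun i j : Fin n => wfun i j

lemma sa_pos {m : ℕ} (r : Fin (m+1)) (h : 1 ≤ (r:ℕ)) :
    ((Fin.succAbove 1 r : Fin (m+2)) : ℕ) = (r:ℕ)+1 := by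
  rw [Fin.succAbove_of_le_castSucc]
  · rfl
  · rw [Fin.le_def, Fin.coe_castSucc, Fin.val_one]
    exact h

lemma sa_zero {m : ℕ} (r : Fin (m+1)) (h : (r:ℕ) = 0) :
    ((Fin.succAbove 1 r : Fin (m+2)) : ℕ) = 0 := by
  have : r = 0 := Fin.ext h
  subst this
  rw [Fin.one_succAbove_zero]
  rfl

lemma det_Wmat (m : ℕ) : (Wmat (m+2)).det = -2^m := by
  rw [Matrix.det_succ_column_zero]
  rw [Finset.sum_eq_single (1 : Fin (m+2))]
  · -- the surviving term
    have hW10 : Wmat (m+2) 1 0 = 1 := by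
      simp only [Wmat, Matrix.of_apply, wfun]
      norm_num
      rw [tfib_zero_right, hfib_one]
    rw [hW10]
    have hsub : ((Wmat (m+2)).submatrix (Fin.succAbove 1) Fin.succ).det = 2^m := by
      have htri : ((Wmat (m+2)).submatrix (Fin.succAbove 1) Fin.succ).BlockTriangular id := by
        intro r c hrc
        have hcr : (c : ℕ) < (r : ℕ) := hrc
        simp only [Matrix.submatrix_apply, Wmat, Matrix.of_apply]
        have hcr' : (c:ℕ) < (r:ℕ) := by simpa using hcr
        have hr : ((Fin.succAbove 1 r : Fin (m+2)) : ℕ) = (r:ℕ)+1 := sa_pos r (by omega)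
        have hc : ((Fin.succ c : Fin (m+2)) : ℕ) = (c:ℕ)+1 := rfl
        rw [hr, hc]
        unfold wfun
        rw [if_neg (by omega), if_neg (by omega), if_pos (by omega)]
      rw [Matrix.det_of_upperTriangular htri]
      have hdiag : ∀ r : Fin (m+1), ((Wmat (m+2)).submatrix (Fin.succAbove 1) Fin.succ) r r
          = if (r:ℕ) = 0 then 1 else 2 := by
        intro r
        simp only [Matrix.submatrix_apply, Wmat, Matrix.of_apply]
        by_cases h0 : (r:ℕ) = 0
        · have hr : ((Fin.succAbove 1 r : Fin (m+2)) : ℕ) = 0 := sa_zero r h0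
          rw [hr, if_pos h0]
          show wfun 0 ((r:ℕ)+1) = 1
          unfold wfun
          rw [if_pos rfl, h0, hfib_one]
        · have hr : ((Fin.succAbove 1 r : Fin (m+2)) : ℕ) = (r:ℕ)+1 := sa_pos r (by omega)
          rw [hr, if_neg h0]
          show wfun ((r:ℕ)+1) ((r:ℕ)+1) = 2
          unfold wfun
          rw [if_neg (by omega), if_neg (by omega), if_neg (by omega), if_pos rfl]
      calc ∏ r : Fin (m+1), ((Wmat (m+2)).submatrix (Fin.succAbove 1) Fin.succ) r r
          = ∏ r : Fin (m+1), (if (r:ℕ) = 0 then (1:ℤ) else 2) :=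
            Finset.prod_congr rfl fun r _ => hdiag r
        _ = 2^m := by
            rw [Fin.prod_univ_succ]
            simp only [Fin.val_zero, if_pos rfl, one_mul]
            have : ∀ r : Fin m, (if ((Fin.succ r : Fin (m+1)) : ℕ) = 0 then (1:ℤ) else 2) = 2 := by
              intro r
              rw [if_neg]
              simp [Fin.val_succ]
            rw [Finset.prod_congr rfl fun r _ => this r, Finset.prod_const]
            simp
    rw [hsub]
    norm_num
  · intro i _ hne
    have : Wmat (m+2) i 0 = 0 := by
      simp only [Wmat, Matrix.of_apply]
      have hi : (i:ℕ) ≠ 1 := by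
        intro h
        exact hne (Fin.ext (by simp [h]))
      unfold wfun
      simp only [Fin.val_zero]
      rcases Nat.eq_zero_or_pos (i:ℕ) with h0 | h0
      · rw [if_pos h0]
        exact hfib_zero
      · rw [if_neg (by omega), if_neg (by omega)]
        simp [h0]
    rw [this]
    ring
  · intro h
    exact absurd (Finset.mem_univ _) h

end Aux

/-- for the Fibonacci sequence `α_i = F(i)`, the generalized symmetric
Pascal triangle satisfies `det(P_{α,α}(n)) = -2^{n-2}` for `n ≥ 2`. -/
theorem det_genPascal_symmetric_fib (n : ℕ) (hn : 2 ≤ n) :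
    (genPascal (fun i => (Nat.fib i : ℤ)) (fun i => (Nat.fib i : ℤ)) n).det =
      -2 ^ (n - 2) := by
  obtain ⟨m, rfl⟩ : ∃ m, n = m + 2 := ⟨n - 2, by omega⟩
  rw [genPascal_factor (m+2), Matrix.det_mul, Matrix.det_mul, Matrix.det_transpose, det_lowerL,
    one_mul, mul_one]
  have hBT : (Bmat (m+2)).det * (Tmat (m+2)).det = (Wmat (m+2)).det := by
    rw [← Matrix.det_mul, BT_eq]
    rfl
  rw [det_Bmat, one_mul] at hBT
  rw [hBT, det_Wmat]
  norm_num
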